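/- Let G be a finite group. Then every primitive central idempotent e of the rational group algebra ℚ[G] lies in the ℚ-linear span of the set of elements e(G,H,K), where (H,K) ranges over all pairs of subgroups K ⊴ H of G with H/K cyclic. -/

import Mathlib

open scoped Classical

/-- `K` is normal in `H` (as subgroups of an ambient group). -/
def NormalIn {G : Type*} [Group G] (H K : Subgroup G) : Prop :=
  ∀ h ∈ H, ∀ x ∈ K, h * x * h⁻¹ ∈ K

/-- `Ĥ = (1/|H|)·Σ_{h∈H} h ∈ ℚ[G]`. -/
noncomputable def hatSub {G : Type*} [Group G] [Fintype G] (H : Subgroup G) :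
    MonoidAlgebra ℚ G :=
  (Nat.card H : ℚ)⁻¹ • ∑ h : H, MonoidAlgebra.of ℚ G (h : G)

/-- The subgroups `M` of `G` with `K ≤ M ≤ H`, `M` normal in `H`, `M ≠ K`, and no
subgroup `N` normal in `H` with `K < N < M`; for `K ⊴ H` these are exactly the
preimages in `H` of the minimal normal subgroups of `H/K`. -/
def minNormalAbove {G : Type*} [Group G] (H K : Subgroup G) : Set (Subgroup G) :=
  {M | K ≤ M ∧ M ≤ H ∧ NormalIn H M ∧ M ≠ K ∧
    ¬∃ N : Subgroup G, NormalIn H N ∧ K < N ∧ N < M}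

/-- `ε(H,K) = Π_{M ∈ minNormalAbove H K} (K̂ − M̂)`, with the convention
`ε(K,K) = K̂`.  (The factors of this product pairwise commute, so the product does not
depend on the order of the factors, which is here fixed by an arbitrary well-ordering.) -/
noncomputable def eps {G : Type*} [Group G] [Fintype G] (H K : Subgroup G) :
    MonoidAlgebra ℚ G :=
  if H = K then hatSub K
  else
    letI lo : LinearOrder (Subgroup G) := linearOrderOfSTO WellOrderingRel
    haveI : DecidableRel lo.le := fun _ _ => Classical.dec _
    haveI : IsTrans (Subgroup G) lo.le := ⟨lo.le_trans⟩
    haveI : IsAntisymm (Subgroup G) lo.le := ⟨lo.le_antisymm⟩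
    haveI : IsTotal (Subgroup G) lo.le := ⟨lo.le_total⟩
    (((Set.toFinite (minNormalAbove H K)).toFinset.sort lo.le).map
      fun M => hatSub K - hatSub M).prod

/-- The conjugate `g⁻¹ · α · g` of an element `α` of the group algebra. -/
noncomputable def conjBy {G : Type*} [Group G] (g : G) (α : MonoidAlgebra ℚ G) :
    MonoidAlgebra ℚ G :=
  MonoidAlgebra.of ℚ G g⁻¹ * α * MonoidAlgebra.of ℚ G g

/-- `e(G,H,K)`: the sum of the distinct `G`-conjugates of `ε(H,K)`. -/
noncomputable def eGHK {G : Type*} [Group G] [Fintype G] (H K : Subgroup G) :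
    MonoidAlgebra ℚ G :=
  ∑ x ∈ (Set.finite_range fun g : G => conjBy g (eps H K)).toFinset, x

section AuxPartA

lemma idem_trace_nat {K : Type*} [Field K] {ι : Type*} [Fintype ι] [DecidableEq ι]
    (B : Matrix ι ι K) (hB : B * B = B) : ∃ r : ℕ, B.trace = (r : K) := by
  set f := Matrix.toLin' B with hf
  have hff : f ∘ₗ f = f := by rw [hf, ← Matrix.toLin'_mul, hB]
  have hproj : LinearMap.IsProj (LinearMap.range f) f := by
    refine ⟨fun x => LinearMap.mem_range_self f x, ?_⟩
    rintro x ⟨y, rfl⟩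
    exact congrFun (congrArg DFunLike.coe hff) y
  refine ⟨Module.finrank K (LinearMap.range f), ?_⟩
  have h2 := hproj.trace
  rw [← h2, LinearMap.trace_eq_matrix_trace K (Pi.basisFun K ι)]
  congr 1
  have h3 : LinearMap.toMatrix (Pi.basisFun K ι) (Pi.basisFun K ι)
      (Matrix.toLin (Pi.basisFun K ι) (Pi.basisFun K ι) B) = B := LinearMap.toMatrix_toLin _ _ B
  rw [hf, ← Matrix.toLin_eq_toLin', h3]

lemma sum_range_shift {M : Type*} [AddCommGroup M] (F : ℕ → M) (n : ℕ) (h : F n = F 0) :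
    ∑ j ∈ Finset.range n, F (j + 1) = ∑ j ∈ Finset.range n, F j := by
  have h1 := Finset.sum_range_succ F n
  have h2 := Finset.sum_range_succ' F n
  rw [h1, ← h] at h2
  exact add_right_cancel h2.symm

lemma trace_pow_coprime {ι : Type*} [Fintype ι] [DecidableEq ι] {n m : ℕ} (hn : 0 < n)
    (hm : Nat.Coprime m n) (M : Matrix ι ι ℚ) (hM : M ^ n = 1) :
    (M ^ m).trace = M.trace := by
  haveI : NeZero n := ⟨hn.ne'⟩
  set n' : ℕ+ := ⟨n, hn⟩ with hn'
  haveI : NeZero (n' : ℕ) := ⟨hn.ne'⟩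
  haveI : IsCyclotomicExtension {(n' : ℕ)} ℚ (CyclotomicField n' ℚ) :=
    CyclotomicField.isCyclotomicExtension (n' : ℕ) ℚ
  set K := CyclotomicField n' ℚ with hK
  set ζ : K := IsCyclotomicExtension.zeta n' ℚ K with hζdef
  have hζ : IsPrimitiveRoot ζ n := IsCyclotomicExtension.zeta_spec n' ℚ K
  set η : K := ζ⁻¹ with hηdef
  have hη : IsPrimitiveRoot η n := hζ.inv
  set φ : ℚ →+* K := algebraMap ℚ K with hφ
  set N : Matrix ι ι K := φ.mapMatrix M with hN
  have hNn : N ^ n = 1 := by rw [hN, ← map_pow, hM, map_one]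
  have hζn : ζ ^ n = 1 := hζ.pow_eq_one
  have hηn : η ^ n = 1 := hη.pow_eq_one
  have hζ0 : ζ ≠ 0 := hζ.ne_zero hn.ne'
  have hζη : ζ * η = 1 := mul_inv_cancel₀ hζ0
  have hnK : (n : K) ≠ 0 := Nat.cast_ne_zero.mpr hn.ne'
  set P : ℕ → Matrix ι ι K := fun i => (n : K)⁻¹ • ∑ j ∈ Finset.range n, η ^ (i * j) • N ^ j
    with hP
  have K1 : ∀ i, N * P i = ζ ^ i • P i := by
    intro i
    set F : ℕ → Matrix ι ι K := fun j => (ζ ^ i * η ^ (i * j)) • N ^ j with hF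
    have hFshift : ∀ j, η ^ (i * j) • N ^ (j + 1) = F (j + 1) := by
      intro j
      rw [hF]
      simp only []
      congr 1
      rw [Nat.mul_succ, pow_add, ← mul_assoc, mul_comm (ζ ^ i) (η ^ (i * j)), mul_assoc,
        ← mul_pow, hζη, one_pow, mul_one]
    have hF0 : F n = F 0 := by
      rw [hF]
      simp only []
      rw [mul_comm i n, pow_mul, hηn, one_pow, mul_one, hNn, Nat.mul_zero, pow_zero, mul_one,
        pow_zero]
    calc N * P i = (n : K)⁻¹ • ∑ j ∈ Finset.range n, η ^ (i * j) • N ^ (j + 1) := by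
          rw [hP]
          simp only []
          rw [mul_smul_comm, Finset.mul_sum]
          congr 1
          refine Finset.sum_congr rfl fun j _ => ?_
          rw [mul_smul_comm, ← pow_succ']
      _ = (n : K)⁻¹ • ∑ j ∈ Finset.range n, F (j + 1) := by
          congr 1
          exact Finset.sum_congr rfl fun j _ => hFshift j
      _ = (n : K)⁻¹ • ∑ j ∈ Finset.range n, F j := by rw [sum_range_shift F n hF0]
      _ = ζ ^ i • P i := by
          rw [hP]
          simp only []
          rw [smul_comm]
          congr 1
          rw [Finset.smul_sum]
          refine Finset.sum_congr rfl fun j _ => ?_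
          rw [hF, smul_smul]
  have K2 : ∀ i k, N ^ k * P i = ζ ^ (i * k) • P i := by
    intro i k
    induction k with
    | zero => simp
    | succ k ih =>
      rw [pow_succ, mul_assoc, K1 i, mul_smul_comm, ih, smul_smul, Nat.mul_succ, pow_add,
        mul_comm (ζ ^ i) (ζ ^ (i * k))]
  have K3 : ∀ i, P i * P i = P i := by
    intro i
    conv_lhs => rw [hP]
    simp only []
    rw [smul_mul_assoc, Finset.sum_mul]
    have : ∀ j ∈ Finset.range n, (η ^ (i * j) • N ^ j) * P i = P i := by
      intro j _
      rw [smul_mul_assoc, K2 i j, smul_smul, ← mul_pow, mul_comm η ζ, hζη, one_pow, one_smul]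
    rw [Finset.sum_congr rfl this, Finset.sum_const, Finset.card_range, ← Nat.cast_smul_eq_nsmul K,
      smul_smul, inv_mul_cancel₀ hnK, one_smul]
  have K4 : ∑ i ∈ Finset.range n, P i = 1 := by
    rw [hP]
    simp only []
    rw [← Finset.smul_sum, Finset.sum_comm]
    have : ∀ j ∈ Finset.range n, ∑ i ∈ Finset.range n, η ^ (i * j) • N ^ j
        = (if j = 0 then (n : K) else 0) • N ^ j := by
      intro j hj
      rw [← Finset.sum_smul]
      congr 1
      have : ∀ i, η ^ (i * j) = (η ^ j) ^ i := by
        intro i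
        rw [← pow_mul, mul_comm]
      rw [Finset.sum_congr rfl fun i _ => this i]
      by_cases h0 : j = 0
      · subst h0
        simp
      · rw [if_neg h0]
        have hx1 : η ^ j ≠ 1 :=
          hη.pow_ne_one_of_pos_of_lt h0 (Finset.mem_range.mp hj)
        have hxn : (η ^ j) ^ n - 1 = 0 := by
          rw [← pow_mul, mul_comm, pow_mul, hηn, one_pow, sub_self]
        have := geom_sum_mul (η ^ j) n
        rw [hxn] at this
        exact (mul_eq_zero.mp this).resolve_right (sub_ne_zero.mpr hx1)
    rw [Finset.sum_congr rfl this, Finset.sum_eq_single_of_mem 0 (Finset.mem_range.mpr hn)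
      (by intro j _ hj0; rw [if_neg hj0, zero_smul])]
    rw [if_pos rfl, pow_zero, smul_smul, inv_mul_cancel₀ hnK, one_smul]
  have K5 : ∀ i, ∃ r : ℕ, (P i).trace = (r : K) := fun i => idem_trace_nat _ (K3 i)
  have K6 : ∀ k, (N ^ k).trace = ∑ i ∈ Finset.range n, ζ ^ (i * k) * (P i).trace := by
    intro k
    conv_lhs => rw [← mul_one (N ^ k), ← K4, Finset.mul_sum]
    rw [Finset.sum_congr rfl fun i _ => K2 i k, Matrix.trace_sum]
    exact Finset.sum_congr rfl fun i _ => by rw [Matrix.trace_smul, smul_eq_mul]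
  -- Galois automorphism
  have hirr : Irreducible (Polynomial.cyclotomic (↑n' : ℕ) ℚ) :=
    Polynomial.cyclotomic.irreducible_rat n'.pos
  set u : (ZMod n)ˣ := ZMod.unitOfCoprime m hm with hu
  set σ : K ≃ₐ[ℚ] K := (IsCyclotomicExtension.autEquivPow K hirr).symm u with hσ
  have hσu : (IsCyclotomicExtension.autEquivPow K hirr) σ = u :=
    (IsCyclotomicExtension.autEquivPow K hirr).apply_symm_apply u
  have hatp : (hζ.autToPow ℚ) σ = u := hσu
  have hσζ : σ ζ = ζ ^ m := by
    have h3 := hζ.autToPow_spec ℚ σ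
    rw [hatp] at h3
    rw [← h3, hu, ZMod.coe_unitOfCoprime, ZMod.val_natCast]
    conv_rhs => rw [← pow_mod_orderOf ζ m]
    rw [← hζ.eq_orderOf]
  have htr : ∀ k, (N ^ k).trace = φ ((M ^ k).trace) := by
    intro k
    rw [hN, ← map_pow]
    simp [Matrix.trace, RingHom.mapMatrix_apply, Matrix.map_apply, Matrix.diag]
  have main : (N ^ m).trace = N.trace := by
    have h61 := K6 1
    have h6m := K6 m
    have hσtr : σ ((N ^ 1).trace) = (N ^ m).trace := by
      rw [h61, map_sum, h6m]
      refine Finset.sum_congr rfl fun i _ => ?_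
      obtain ⟨r, hr⟩ := K5 i
      rw [hr, map_mul, map_natCast, map_pow, hσζ, ← pow_mul, mul_one, mul_comm i m, mul_comm m i]
    have hrat : σ ((N ^ 1).trace) = (N ^ 1).trace := by
      rw [htr 1]
      exact σ.commutes _
    rw [← hσtr, hrat, pow_one]
  have hN1 := htr 1
  simp only [pow_one] at hN1
  apply φ.injective
  rw [← htr m, ← hN1]
  exact main

end AuxPartA

section AuxPartA2

lemma pow_proj {R : Type*} [Ring R] (p u : R) (hp : p * p = p) (hc : p * u = u * p) :
    ∀ k : ℕ, (p * u + (1 - p)) ^ k = p * u ^ k + (1 - p) := by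
  have hck : ∀ k : ℕ, p * u ^ k = u ^ k * p := by
    intro k
    induction k with
    | zero => simp
    | succ k ih => rw [pow_succ, ← mul_assoc, ih, mul_assoc, hc, ← mul_assoc]
  intro k
  induction k with
  | zero => simp
  | succ k ih =>
    rw [pow_succ, ih]
    have expand : (p * u ^ k + (1 - p)) * (p * u + (1 - p)) =
        (p * u ^ k) * (p * u) + (p * u ^ k) * (1 - p) + ((1 - p) * (p * u) + (1 - p) * (1 - p)) := by
      noncomm_ring
    rw [expand]
    have e1 : (p * u ^ k) * (p * u) = p * u ^ (k + 1) := by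
      rw [hck k, mul_assoc, ← mul_assoc p p u, hp, ← mul_assoc, ← hck k, mul_assoc, ← pow_succ]
    have e2 : (p * u ^ k) * (1 - p) = 0 := by
      rw [mul_sub, mul_one, hck k, mul_assoc, hp, ← hck k]
      simp
    have e3 : (1 - p) * (p * u) = 0 := by
      rw [sub_mul, one_mul, ← mul_assoc, hp]
      simp
    have e4 : (1 - p) * (1 - p) = 1 - p := by
      noncomm_ring [hp]
    rw [e1, e2, e3, e4]
    simp

variable {G : Type*} [Group G] [Fintype G]

noncomputable def gBasis (G : Type*) [Group G] : Module.Basis G ℚ (MonoidAlgebra ℚ G) :=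
  MonoidAlgebra.basis G ℚ

lemma trace_mulLeft (α : MonoidAlgebra ℚ G) :
    LinearMap.trace ℚ (MonoidAlgebra ℚ G) (LinearMap.mulLeft ℚ α)
      = (Fintype.card G : ℚ) * α.coeff 1 := by
  rw [LinearMap.trace_eq_matrix_trace ℚ (gBasis G)]
  have hent : ∀ g : G, LinearMap.toMatrix (gBasis G) (gBasis G) (LinearMap.mulLeft ℚ α) g g
      = α.coeff 1 := by
    intro g
    rw [LinearMap.toMatrix_apply]
    have hb : gBasis G g = MonoidAlgebra.single g 1 := rfl
    rw [hb]
    have : (gBasis G).repr (LinearMap.mulLeft ℚ α (MonoidAlgebra.single g 1))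
        = (α * MonoidAlgebra.single g 1).coeff := rfl
    rw [this]
    have := MonoidAlgebra.coeff_mul_single_apply α (1 : ℚ) g g
    rw [this, mul_inv_cancel, mul_one]
  rw [Matrix.trace]
  simp only [Matrix.diag_apply]
  rw [Finset.sum_congr rfl fun g _ => hent g, Finset.sum_const, Finset.card_univ,
    nsmul_eq_mul]



lemma coeff_pow_eq (e : MonoidAlgebra ℚ G) (hcentral : ∀ x, x * e = e * x) (hidem : e * e = e)
    (g : G) (m : ℕ) (hm : Nat.Coprime m (Fintype.card G)) : e.coeff (g ^ m) = e.coeff g := by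
  classical
  set n := Fintype.card G with hn
  have hn0 : 0 < n := Fintype.card_pos
  set P : Module.End ℚ (MonoidAlgebra ℚ G) := LinearMap.mulLeft ℚ e with hPdef
  set U : Module.End ℚ (MonoidAlgebra ℚ G) :=
    LinearMap.mulLeft ℚ (MonoidAlgebra.of ℚ G g⁻¹) with hUdef
  have hp : P * P = P := by
    rw [hPdef, Module.End.mul_eq_comp, ← LinearMap.mulLeft_mul, hidem]
  have hc : P * U = U * P := by
    rw [hPdef, hUdef, Module.End.mul_eq_comp, Module.End.mul_eq_comp, ← LinearMap.mulLeft_mul,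
      ← LinearMap.mulLeft_mul, hcentral]
  have hUk : ∀ k : ℕ, U ^ k = LinearMap.mulLeft ℚ (MonoidAlgebra.of ℚ G (g⁻¹ ^ k)) := by
    intro k
    rw [hUdef, LinearMap.pow_mulLeft, ← map_pow]
  have hUn : U ^ n = 1 := by
    rw [hUk n, pow_card_eq_one, map_one]
    ext x
    simp
  set D : Module.End ℚ (MonoidAlgebra ℚ G) := P * U + (1 - P) with hDdef
  have hD := pow_proj P U hp hc
  have hDn : D ^ n = 1 := by
    rw [hDdef, hD n, hUn, mul_one, add_sub_cancel]
  -- transfer to matrices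
  set A2 : Matrix G G ℚ := LinearMap.toMatrixAlgEquiv (gBasis G) D with hA2
  have hA2n : A2 ^ n = 1 := by rw [hA2, ← map_pow, hDn, map_one]
  have htr : ∀ k : ℕ, (A2 ^ k).trace
      = LinearMap.trace ℚ (MonoidAlgebra ℚ G) (D ^ k) := by
    intro k
    rw [hA2, ← map_pow, LinearMap.trace_eq_matrix_trace ℚ (gBasis G)]
    rfl
  have hmain := trace_pow_coprime hn0 hm A2 hA2n
  have htr1 : A2.trace = LinearMap.trace ℚ (MonoidAlgebra ℚ G) (D ^ 1) := by
    rw [← htr 1, pow_one]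
  rw [htr m, htr1] at hmain
  have htrPU : ∀ k : ℕ, LinearMap.trace ℚ (MonoidAlgebra ℚ G) (P * U ^ k)
      = (n : ℚ) * e.coeff (g ^ k) := by
    intro k
    have : P * U ^ k = LinearMap.mulLeft ℚ (e * MonoidAlgebra.of ℚ G (g⁻¹ ^ k)) := by
      rw [hUk k, hPdef, Module.End.mul_eq_comp, ← LinearMap.mulLeft_mul]
    rw [this, trace_mulLeft]
    congr 1
    rw [MonoidAlgebra.of_apply]
    have : (e * MonoidAlgebra.single (g⁻¹ ^ k) (1:ℚ)).coeff 1 = e.coeff (1 * (g⁻¹ ^ k)⁻¹) * 1 :=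
      MonoidAlgebra.coeff_mul_single_apply e 1 (g⁻¹ ^ k) 1
    rw [this]
    rw [one_mul, mul_one, inv_pow, inv_inv]
  have hsplit : ∀ k : ℕ, LinearMap.trace ℚ (MonoidAlgebra ℚ G) (D ^ k)
      = (n : ℚ) * e.coeff (g ^ k) + LinearMap.trace ℚ (MonoidAlgebra ℚ G) (1 - P) := by
    intro k
    rw [hD k, map_add, htrPU k]
  rw [hsplit m, hsplit 1, pow_one] at hmain
  have := add_right_cancel hmain
  exact mul_left_cancel₀ (by exact_mod_cast hn0.ne') this

end AuxPartA2

section PartB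
variable {G : Type*} [Group G] [Fintype G]

/-- the set of generators of the cyclic subgroup generated by `g` -/
noncomputable def genFiber (g : G) : Finset G :=
  Finset.univ.filter (fun h => Subgroup.zpowers h = Subgroup.zpowers g)

noncomputable def genSum (g : G) : MonoidAlgebra ℚ G :=
  ∑ x ∈ genFiber g, MonoidAlgebra.of ℚ G x

lemma mem_genFiber {g h : G} :
    h ∈ genFiber g ↔ Subgroup.zpowers h = Subgroup.zpowers g := by
  simp [genFiber]

lemma genFiber_congr {g h : G} (hgh : Subgroup.zpowers h = Subgroup.zpowers g) :
    genFiber h = genFiber g := by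
  ext x
  simp [mem_genFiber, hgh]

lemma genFiber_card_ne {g : G} : ((genFiber g).card : ℚ) ≠ 0 := by
  have : g ∈ genFiber g := mem_genFiber.mpr rfl
  have hpos : 0 < (genFiber g).card := Finset.card_pos.mpr ⟨g, this⟩
  exact_mod_cast hpos.ne'

noncomputable def S1 (G : Type*) [Group G] [Fintype G] : Submodule ℚ (MonoidAlgebra ℚ G) :=
  Submodule.span ℚ {x : MonoidAlgebra ℚ G | ∃ g : G, x = hatSub (Subgroup.zpowers g)}

lemma fib_sum (s : Finset G)
    (hs : ∀ x ∈ s, ∀ y : G, Subgroup.zpowers y = Subgroup.zpowers x → y ∈ s)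
    (c : G → ℚ) (hc : ∀ x y : G, Subgroup.zpowers x = Subgroup.zpowers y → c x = c y) :
    ∑ x ∈ s, c x • MonoidAlgebra.of ℚ G x
      = ∑ x ∈ s, (((genFiber x).card : ℚ)⁻¹ * c x) • genSum x := by
  have step1 : ∀ x : G, (((genFiber x).card : ℚ)⁻¹ * c x) • genSum x
      = ∑ y ∈ genFiber x, (((genFiber x).card : ℚ)⁻¹ * c x) • MonoidAlgebra.of ℚ G y := by
    intro x
    rw [genSum, Finset.smul_sum]
  rw [Finset.sum_congr rfl fun x _ => step1 x]
  rw [Finset.sum_comm' (t' := s) (s' := fun y => genFiber y)]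
  · refine (Finset.sum_congr rfl fun y hy => ?_).symm
    have hconst : ∀ x ∈ genFiber y, (((genFiber x).card : ℚ)⁻¹ * c x) • MonoidAlgebra.of ℚ G y
        = (((genFiber y).card : ℚ)⁻¹ * c y) • MonoidAlgebra.of ℚ G y := by
      intro x hx
      have hxy := mem_genFiber.mp hx
      rw [genFiber_congr hxy, hc x y hxy]
    rw [Finset.sum_congr rfl hconst, Finset.sum_const, ← Nat.cast_smul_eq_nsmul ℚ, smul_smul,
      ← mul_assoc, mul_inv_cancel₀ genFiber_card_ne, one_mul]
  · intro x y
    constructor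
    · rintro ⟨hxs, hyx⟩
      have hyx' := mem_genFiber.mp hyx
      exact ⟨mem_genFiber.mpr hyx'.symm, hs x hxs y hyx'⟩
    · rintro ⟨hxy, hys⟩
      have hxy' := mem_genFiber.mp hxy
      exact ⟨hs y hys x hxy', mem_genFiber.mpr hxy'.symm⟩


lemma sum_zpowers_eq (g : G) :
    ∑ x ∈ Finset.univ.filter (· ∈ Subgroup.zpowers g), MonoidAlgebra.of ℚ G x
      = (Nat.card (Subgroup.zpowers g) : ℚ) • hatSub (Subgroup.zpowers g) := by
  rw [hatSub, smul_smul, mul_inv_cancel₀, one_smul]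
  · exact Finset.sum_subtype (p := (· ∈ Subgroup.zpowers g))
      (Finset.univ.filter (· ∈ Subgroup.zpowers g)) (by simp) (fun x => MonoidAlgebra.of ℚ G x)
  · have : 0 < Nat.card (Subgroup.zpowers g) := Nat.card_pos
    exact_mod_cast this.ne'

lemma genSum_mem : ∀ g : G, genSum g ∈ S1 G := by
  suffices H : ∀ n : ℕ, ∀ g : G, orderOf g < n → genSum g ∈ S1 G by
    exact fun g => H (orderOf g + 1) g (Nat.lt_succ_self _)
  intro n
  induction n with
  | zero => exact fun g hg => absurd hg (Nat.not_lt_zero _)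
  | succ n ih =>
    intro g hg
    set s₀ : Finset G := Finset.univ.filter (· ∈ Subgroup.zpowers g) with hs₀
    have hsplit := Finset.sum_filter_add_sum_filter_not s₀
      (fun h => Subgroup.zpowers h = Subgroup.zpowers g) (fun x => MonoidAlgebra.of ℚ G x)
    have hfil : s₀.filter (fun h => Subgroup.zpowers h = Subgroup.zpowers g) = genFiber g := by
      ext x
      simp only [hs₀, Finset.mem_filter, Finset.mem_univ, true_and, mem_genFiber]
      constructor
      · rintro ⟨-, h2⟩; exact h2
      · intro h2
        exact ⟨h2 ▸ Subgroup.mem_zpowers x, h2⟩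
    rw [hfil] at hsplit
    have hgen : genSum g
        = ∑ x ∈ s₀, MonoidAlgebra.of ℚ G x
          - ∑ x ∈ s₀.filter (fun h => ¬ Subgroup.zpowers h = Subgroup.zpowers g),
              MonoidAlgebra.of ℚ G x := by
      rw [genSum, ← hsplit]
      abel
    rw [hgen]
    refine sub_mem ?_ ?_
    · rw [sum_zpowers_eq g]
      exact Submodule.smul_mem _ _ (Submodule.subset_span ⟨g, rfl⟩)
    · set s₂ := s₀.filter (fun h => ¬ Subgroup.zpowers h = Subgroup.zpowers g) with hs₂
      have hmem₂ : ∀ x, x ∈ s₂ ↔ x ∈ Subgroup.zpowers g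
          ∧ ¬ Subgroup.zpowers x = Subgroup.zpowers g := by
        intro x
        simp [hs₂, hs₀]
      have hclosed : ∀ x ∈ s₂, ∀ y : G, Subgroup.zpowers y = Subgroup.zpowers x → y ∈ s₂ := by
        intro x hx y hyx
        obtain ⟨hx1, hx2⟩ := (hmem₂ x).mp hx
        refine (hmem₂ y).mpr ⟨?_, ?_⟩
        · have : Subgroup.zpowers y ≤ Subgroup.zpowers g := by
            rw [hyx]
            exact (Subgroup.zpowers_le).mpr hx1
          exact this (Subgroup.mem_zpowers y)
        · rw [hyx]; exact hx2
      have hfib := fib_sum s₂ hclosed (fun _ => (1:ℚ)) (fun _ _ _ => rfl)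
      simp only [one_smul, mul_one] at hfib
      rw [hfib]
      refine Submodule.sum_smul_mem _ _ fun x hx => ?_
      obtain ⟨hx1, hx2⟩ := (hmem₂ x).mp hx
      refine ih x ?_
      have hlt : orderOf x < orderOf g := by
        rw [← Nat.card_zpowers, ← Nat.card_zpowers]
        have hle : Subgroup.zpowers x ≤ Subgroup.zpowers g := (Subgroup.zpowers_le).mpr hx1
        have hss : (Subgroup.zpowers x : Set G) ⊂ (Subgroup.zpowers g : Set G) :=
          SetLike.coe_ssubset_coe.mpr (lt_of_le_of_ne hle hx2)
        have key : ∀ H : Subgroup G, Nat.card H = (H : Set G).ncard := by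
          intro H
          rw [← Nat.card_coe_set_eq]
          rfl
        rw [key, key]
        exact Set.ncard_lt_ncard hss (Set.toFinite _)
      omega

lemma finsupp_decomp (e : MonoidAlgebra ℚ G) :
    e = ∑ x ∈ Finset.univ, e.coeff x • MonoidAlgebra.of ℚ G x := by
  have h1 : ∀ x : G, e.coeff x • MonoidAlgebra.of ℚ G x = MonoidAlgebra.single x (e.coeff x) := by
    intro x
    rw [MonoidAlgebra.of_apply, MonoidAlgebra.smul_single', mul_one]
  rw [Finset.sum_congr rfl fun x _ => h1 x]
  ext y
  rw [MonoidAlgebra.coeff_sum, Finset.sum_apply']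
  rw [Finset.sum_eq_single_of_mem y (Finset.mem_univ y)]
  · simp
  · intro b _ hb
    exact Finsupp.single_eq_of_ne hb.symm

lemma conjBy_mul (a b : G) (α : MonoidAlgebra ℚ G) :
    conjBy (a * b) α = conjBy b (conjBy a α) := by
  unfold conjBy
  rw [mul_inv_rev, map_mul, map_mul]
  noncomm_ring

lemma conjBy_one (α : MonoidAlgebra ℚ G) : conjBy 1 α = α := by
  unfold conjBy
  rw [inv_one, map_one, one_mul, mul_one]

lemma conjBy_inj (x : G) {α β : MonoidAlgebra ℚ G} (h : conjBy x α = conjBy x β) : α = β := by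
  have := congrArg (conjBy x⁻¹) h
  rwa [← conjBy_mul, ← conjBy_mul, mul_inv_cancel, conjBy_one, conjBy_one] at this


lemma sum_conj_eq (C K0 : Subgroup G) :
    ∑ x ∈ Finset.univ, conjBy x (eps C K0)
      = (Finset.univ.filter (fun s : G => conjBy s (eps C K0) = eps C K0)).card • eGHK C K0 := by
  set ε := eps C K0 with hε
  set f : G → MonoidAlgebra ℚ G := fun x => conjBy x ε with hf
  set St : Finset G := Finset.univ.filter (fun s : G => conjBy s ε = ε) with hSt
  have himg : (Set.finite_range fun g : G => conjBy g ε).toFinset = Finset.univ.image f := by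
    ext v
    simp only [Set.Finite.mem_toFinset, Set.mem_range, Finset.mem_image, Finset.mem_univ,
      true_and]
    exact Iff.rfl
  have hgrp := Finset.sum_fiberwise_eq_sum_filter Finset.univ (Finset.univ.image f) f f
  have hright : Finset.univ.filter (fun i => f i ∈ Finset.univ.image f) = Finset.univ := by
    ext i
    simp only [Finset.mem_filter, Finset.mem_univ, true_and, iff_true]
    exact Finset.mem_image_of_mem f (Finset.mem_univ i)
  rw [hright] at hgrp
  have hcardconst : ∀ j ∈ Finset.univ.image f,
      (Finset.univ.filter (fun i => f i = j)).card = St.card := by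
    intro j hj
    obtain ⟨x₀, -, hx₀⟩ := Finset.mem_image.mp hj
    refine Finset.card_bij' (fun y _ => y * x₀⁻¹) (fun s _ => s * x₀) ?_ ?_ ?_ ?_
    · intro y hy
      have hfy : f y = j := (Finset.mem_filter.mp hy).2
      rw [hSt, Finset.mem_filter]
      refine ⟨Finset.mem_univ _, ?_⟩
      apply conjBy_inj x₀
      rw [← conjBy_mul, inv_mul_cancel_right]
      rw [show conjBy y ε = f y from rfl, hfy, ← hx₀]
    · intro s hs
      have hcs : conjBy s ε = ε := (Finset.mem_filter.mp hs).2
      rw [Finset.mem_filter]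
      refine ⟨Finset.mem_univ _, ?_⟩
      show conjBy (s * x₀) ε = j
      rw [conjBy_mul, hcs, ← hx₀]
    · intro y _
      simp only [inv_mul_cancel_right]
    · intro s _
      simp only [mul_inv_cancel_right]
  have hinner : ∀ j ∈ Finset.univ.image f,
      ∑ i ∈ Finset.univ.filter (fun i => f i = j), f i = St.card • j := by
    intro j hj
    rw [Finset.sum_congr rfl (fun i hi => (Finset.mem_filter.mp hi).2), Finset.sum_const,
      hcardconst j hj]
  rw [← hgrp, Finset.sum_congr rfl hinner, ← Finset.smul_sum]
  congr 1
  rw [eGHK, himg]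

lemma coeff_zpowers_eq (e : MonoidAlgebra ℚ G) (hcentral : ∀ x, x * e = e * x)
    (hidem : e * e = e) {h g : G} (hgh : Subgroup.zpowers h = Subgroup.zpowers g) :
    e.coeff h = e.coeff g := by
  classical
  have hmem : h ∈ Subgroup.zpowers g := hgh ▸ Subgroup.mem_zpowers h
  have hfo : IsOfFinOrder g := by
    rw [← orderOf_pos_iff]
    exact orderOf_pos g
  have hmem' : h ∈ Submonoid.powers g := hfo.mem_powers_iff_mem_zpowers.mpr hmem
  obtain ⟨k, hk⟩ := hmem'
  have hk' : g ^ k = h := hk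
  have hd0 : 0 < orderOf g := orderOf_pos g
  have hord : orderOf h = orderOf g := by
    rw [← Nat.card_zpowers, ← Nat.card_zpowers, hgh]
  have hgcd : Nat.gcd (orderOf g) k = 1 := by
    have h1 : orderOf (g ^ k) = orderOf g / Nat.gcd (orderOf g) k := orderOf_pow g
    rw [hk', hord] at h1
    rcases (Nat.div_eq_self.mp h1.symm) with h2 | h2
    · omega
    · exact h2
  haveI : NeZero (Fintype.card G) := ⟨Fintype.card_pos.ne'⟩
  haveI : NeZero (orderOf g) := ⟨hd0.ne'⟩
  have hdvd : orderOf g ∣ Fintype.card G := orderOf_dvd_card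
  obtain ⟨u, hu⟩ := ZMod.unitsMap_surjective hdvd
    (ZMod.unitOfCoprime k (Nat.coprime_comm.mp hgcd))
  have hcop : Nat.Coprime ((u : ZMod (Fintype.card G))).val (Fintype.card G) :=
    ZMod.val_coe_unit_coprime u
  have hmk : g ^ ((u : ZMod (Fintype.card G))).val = g ^ k := by
    rw [pow_eq_pow_iff_modEq, ← ZMod.natCast_eq_natCast_iff]
    have h3 : ((((u : ZMod (Fintype.card G))).val : ℕ) : ZMod (orderOf g))
        = ZMod.cast (u : ZMod (Fintype.card G)) := by
      rw [ZMod.natCast_val]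
    rw [h3]
    have h4 : ((ZMod.unitsMap hdvd u : ZMod (orderOf g))) = ((k : ZMod (orderOf g))) := by
      rw [hu, ZMod.coe_unitOfCoprime]
    rw [← h4, ZMod.unitsMap_def]
    rfl
  rw [← hk', ← hmk]
  exact coeff_pow_eq e hcentral hidem g _ hcop


noncomputable def conjLM (x : G) : MonoidAlgebra ℚ G →ₗ[ℚ] MonoidAlgebra ℚ G :=
  (LinearMap.mulRight ℚ (MonoidAlgebra.of ℚ G x)).comp
    (LinearMap.mulLeft ℚ (MonoidAlgebra.of ℚ G x⁻¹))

lemma conjLM_apply (x : G) (α : MonoidAlgebra ℚ G) : conjLM x α = conjBy x α := by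
  unfold conjLM conjBy
  rfl

end PartB


/-- Let `G` be a finite group. Then every primitive central idempotent `e` of the
rational group algebra `ℚ[G]` lies in the `ℚ`-linear span of the set of elements
`e(G,H,K)`, where `(H,K)` ranges over all pairs of subgroups `K ⊴ H` of `G` with
`H/K` cyclic. -/
theorem stmt_8 (G : Type*) [Group G] [Fintype G] (e : MonoidAlgebra ℚ G)
    (hne : e ≠ 0)
    (hcentral : ∀ x : MonoidAlgebra ℚ G, x * e = e * x)
    (hidem : e * e = e)
    (hprim : ¬∃ e₁ e₂ : MonoidAlgebra ℚ G, e₁ ≠ 0 ∧ e₂ ≠ 0 ∧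
      (∀ x, x * e₁ = e₁ * x) ∧ (∀ x, x * e₂ = e₂ * x) ∧
      e₁ * e₁ = e₁ ∧ e₂ * e₂ = e₂ ∧ e₁ * e₂ = 0 ∧ e = e₁ + e₂) :
    e ∈ Submodule.span ℚ
      {x : MonoidAlgebra ℚ G | ∃ H K : Subgroup G, K ≤ H ∧ NormalIn H K ∧
        (∃ a ∈ H, ∀ h ∈ H, ∃ z : ℤ, (a ^ z)⁻¹ * h ∈ K) ∧ x = eGHK H K} := by
  classical
  set goalSet : Set (MonoidAlgebra ℚ G) :=
    {x : MonoidAlgebra ℚ G | ∃ H K : Subgroup G, K ≤ H ∧ NormalIn H K ∧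
      (∃ a ∈ H, ∀ h ∈ H, ∃ z : ℤ, (a ^ z)⁻¹ * h ∈ K) ∧ x = eGHK H K} with hgoal
  have hconst : ∀ x y : G, Subgroup.zpowers x = Subgroup.zpowers y → e.coeff x = e.coeff y :=
    fun x y hxy => coeff_zpowers_eq e hcentral hidem hxy
  have he1 : e ∈ S1 G := by
    rw [finsupp_decomp e, fib_sum Finset.univ (fun x _ y _ => Finset.mem_univ y)
      (fun x => e.coeff x) hconst]
    exact Submodule.sum_smul_mem _ _ fun x _ => genSum_mem x
  set Tmap : MonoidAlgebra ℚ G →ₗ[ℚ] MonoidAlgebra ℚ G := ∑ x ∈ Finset.univ, conjLM x with hT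
  have hTapp : ∀ α : MonoidAlgebra ℚ G, Tmap α = ∑ x ∈ Finset.univ, conjBy x α := by
    intro α
    rw [hT, LinearMap.sum_apply]
    exact Finset.sum_congr rfl fun x _ => conjLM_apply x α
  have hTe : Tmap e = (Fintype.card G : ℚ) • e := by
    rw [hTapp]
    have hcj : ∀ x : G, conjBy x e = e := by
      intro x
      unfold conjBy
      rw [hcentral, mul_assoc, ← map_mul, inv_mul_cancel, map_one, mul_one]
    rw [Finset.sum_congr rfl fun x _ => hcj x, Finset.sum_const, Finset.card_univ,
      ← Nat.cast_smul_eq_nsmul ℚ]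
  have hThat : ∀ g : G, Tmap (hatSub (Subgroup.zpowers g)) ∈ Submodule.span ℚ goalSet := by
    intro g
    have heps : eps (Subgroup.zpowers g) (Subgroup.zpowers g) = hatSub (Subgroup.zpowers g) := by
      unfold eps
      rw [if_pos rfl]
    rw [hTapp, ← heps, sum_conj_eq, ← Nat.cast_smul_eq_nsmul ℚ]
    refine Submodule.smul_mem _ _ (Submodule.subset_span ?_)
    refine ⟨Subgroup.zpowers g, Subgroup.zpowers g, le_refl _, ?_, ?_, rfl⟩
    · intro h hh x hx
      exact mul_mem (mul_mem hh hx) (inv_mem hh)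
    · exact ⟨1, one_mem _, fun h hh => ⟨0, by simpa using hh⟩⟩
  have hmap : Tmap e ∈ Submodule.span ℚ goalSet := by
    have h1 : Tmap e ∈ Submodule.map Tmap (S1 G) := Submodule.mem_map_of_mem he1
    rw [S1, Submodule.map_span] at h1
    refine Submodule.span_le.mpr ?_ h1
    rintro y ⟨x, ⟨g, rfl⟩, rfl⟩
    exact hThat g
  have hcard0 : (Fintype.card G : ℚ) ≠ 0 := by exact_mod_cast Fintype.card_pos.ne'
  have hfin : e = (Fintype.card G : ℚ)⁻¹ • Tmap e := by
    rw [hTe, smul_smul, inv_mul_cancel₀ hcard0, one_smul]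
  rw [hfin]
  exact Submodule.smul_mem _ _ hmap
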